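/- Let q ≥ 2 and 1 ≤ i ≤ k be integers, and set d_j = q^{k-1}(q^j - 1)/(q^{j-1}(q-1)) for 1 ≤ j ≤ k. Then ∏_{j≠i, 1≤j≤k} d_j/|d_j - d_i| = q^{i(i-1)/2} · [k choose i]_q, where [k choose i]_q = ∏_{j=i+1}^{k} (q^j - 1)/(q^{j-i} - 1) is the Gaussian binomial coefficient. -/

import Mathlib

/-- For `q ≥ 2`, `1 ≤ i ≤ k`, with `d_j = q^{k-1}(q^j-1)/(q^{j-1}(q-1))`,
the Herzog–Kühl product satisfies
`∏_{j≠i, 1≤j≤k} d_j/|d_j - d_i| = q^{i(i-1)/2} · [k choose i]_q`,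
where `[k choose i]_q = ∏_{j=i+1}^{k} (q^j-1)/(q^{j-i}-1)`. -/
theorem stmt_7 {q k i : ℕ} (hq : 2 ≤ q) (hi : 1 ≤ i) (hik : i ≤ k)
    (d : ℕ → ℚ)
    (hd : ∀ j, d j = (q : ℚ) ^ (k - 1) * ((q : ℚ) ^ j - 1) /
      ((q : ℚ) ^ (j - 1) * ((q : ℚ) - 1))) :
    ∏ j ∈ (Finset.Icc 1 k).erase i, (d j / |d j - d i|) =
      (q : ℚ) ^ (i * (i - 1) / 2) *
        ∏ j ∈ Finset.Icc (i + 1) k, (((q : ℚ) ^ j - 1) / ((q : ℚ) ^ (j - i) - 1)) := by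
  set Q : ℚ := (q : ℚ) with hQ
  have hQ1 : (1:ℚ) < Q := by
    have h2 : (2:ℚ) ≤ Q := by rw [hQ]; exact_mod_cast hq
    linarith
  have hQ0 : (0:ℚ) < Q := by linarith
  have hQm1 : (0:ℚ) < Q - 1 := by linarith
  have hpow : ∀ n : ℕ, (0:ℚ) < Q ^ n := fun n => pow_pos hQ0 n
  have hpowlt : ∀ {a b : ℕ}, a < b → Q ^ a < Q ^ b := fun {a b} h =>
    pow_lt_pow_right₀ hQ1 h
  have hpow1 : ∀ n : ℕ, 1 ≤ n → (0:ℚ) < Q ^ n - 1 := by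
    intro n hn
    have := hpowlt (show 0 < n from hn)
    simpa using this
  -- closed form for d
  have hd2 : ∀ j, 1 ≤ j → j ≤ k → d j = (Q ^ k - Q ^ (k - j)) / (Q - 1) := by
    intro j hj1 hjk
    rw [hd j]
    have e2 : Q ^ (k - j) * Q ^ j = Q ^ k := by rw [← pow_add]; congr 1; omega
    have e1 : Q ^ (k - 1) = Q ^ (k - j) * Q ^ (j - 1) := by rw [← pow_add]; congr 1; omega
    rw [e1, div_eq_div_iff (by positivity) (by linarith)]
    linear_combination Q ^ (j - 1) * (Q - 1) * e2
  -- term for j > i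
  have term_gt : ∀ j, i < j → j ≤ k → d j / |d j - d i| = (Q ^ j - 1) / (Q ^ (j - i) - 1) := by
    intro j hij hjk
    rw [hd2 j (by omega) hjk, hd2 i hi hik]
    have hlt : Q ^ (k - j) < Q ^ (k - i) := hpowlt (by omega)
    have hsub : (Q ^ k - Q ^ (k - j)) / (Q - 1) - (Q ^ k - Q ^ (k - i)) / (Q - 1)
        = (Q ^ (k - i) - Q ^ (k - j)) / (Q - 1) := by ring
    rw [hsub, abs_of_pos (div_pos (by linarith) hQm1)]
    have e2 : Q ^ k = Q ^ (k - j) * Q ^ j := by rw [← pow_add]; congr 1; omega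
    have e3 : Q ^ (k - i) = Q ^ (k - j) * Q ^ (j - i) := by rw [← pow_add]; congr 1; omega
    rw [e2, e3]
    have h1 : Q ^ (j - i) - 1 ≠ 0 := ne_of_gt (hpow1 _ (by omega))
    have h2 : Q ^ (k - j) ≠ 0 := ne_of_gt (hpow _)
    have h3 : Q - 1 ≠ 0 := ne_of_gt hQm1
    have h4 : Q ^ (k - j) * Q ^ (j - i) - Q ^ (k - j) ≠ 0 := by
      have := hpow1 (j - i) (by omega)
      have := hpow (k - j)
      nlinarith
    field_simp
  -- term for j < i
  have term_lt : ∀ j, 1 ≤ j → j < i →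
      d j / |d j - d i| = Q ^ (i - j) * ((Q ^ j - 1) / (Q ^ (i - j) - 1)) := by
    intro j hj1 hji
    rw [hd2 j hj1 (by omega), hd2 i hi hik]
    have hlt : Q ^ (k - i) < Q ^ (k - j) := hpowlt (by omega)
    have hsub : (Q ^ k - Q ^ (k - j)) / (Q - 1) - (Q ^ k - Q ^ (k - i)) / (Q - 1)
        = (Q ^ (k - i) - Q ^ (k - j)) / (Q - 1) := by ring
    rw [hsub, abs_of_neg (div_neg_of_neg_of_pos (by linarith) hQm1)]
    have e2 : Q ^ k = Q ^ (k - i) * (Q ^ (i - j) * Q ^ j) := by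
      rw [← pow_add, ← pow_add]; congr 1; omega
    have e3 : Q ^ (k - j) = Q ^ (k - i) * Q ^ (i - j) := by rw [← pow_add]; congr 1; omega
    rw [e2, e3]
    have h1 : Q ^ (i - j) - 1 ≠ 0 := ne_of_gt (hpow1 _ (by omega))
    have h2 : Q ^ (k - i) ≠ 0 := ne_of_gt (hpow _)
    have h3 : Q - 1 ≠ 0 := ne_of_gt hQm1
    have h4 : Q ^ (k - i) * Q ^ (i - j) - Q ^ (k - i) ≠ 0 := by
      have := hpow1 (i - j) (by omega)
      have := hpow (k - i)
      nlinarith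
    have h5 : 1 - Q ^ (i - j) ≠ 0 := fun h => h1 (by linarith)
    field_simp
    ring
  -- split the index set
  have hset : (Finset.Icc 1 k).erase i = Finset.Icc 1 (i - 1) ∪ Finset.Icc (i + 1) k := by
    ext j
    simp only [Finset.mem_erase, Finset.mem_Icc, Finset.mem_union]
    omega
  have hdisj : Disjoint (Finset.Icc 1 (i - 1)) (Finset.Icc (i + 1) k) := by
    rw [Finset.disjoint_left]
    intro a ha hb
    simp only [Finset.mem_Icc] at ha hb
    omega
  rw [hset, Finset.prod_union hdisj]
  have hright : ∏ j ∈ Finset.Icc (i + 1) k, (d j / |d j - d i|)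
      = ∏ j ∈ Finset.Icc (i + 1) k, ((Q ^ j - 1) / (Q ^ (j - i) - 1)) := by
    refine Finset.prod_congr rfl ?_
    intro j hj
    simp only [Finset.mem_Icc] at hj
    exact term_gt j (by omega) hj.2
  have hleft : ∏ j ∈ Finset.Icc 1 (i - 1), (d j / |d j - d i|)
      = Q ^ (i * (i - 1) / 2) := by
    have h1 : ∏ j ∈ Finset.Icc 1 (i - 1), (d j / |d j - d i|)
        = ∏ j ∈ Finset.Icc 1 (i - 1), (Q ^ (i - j) * ((Q ^ j - 1) / (Q ^ (i - j) - 1))) := by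
      refine Finset.prod_congr rfl ?_
      intro j hj
      simp only [Finset.mem_Icc] at hj
      exact term_lt j hj.1 (by omega)
    rw [h1, Finset.prod_mul_distrib]
    have h2 : ∏ j ∈ Finset.Icc 1 (i - 1), Q ^ (i - j) = Q ^ (i * (i - 1) / 2) := by
      rw [Finset.prod_pow_eq_pow_sum]
      congr 1
      have hbij : ∑ j ∈ Finset.Icc 1 (i - 1), (i - j) = ∑ j ∈ Finset.Icc 1 (i - 1), j := by
        refine Finset.sum_nbij' (fun j => i - j) (fun j => i - j) ?_ ?_ ?_ ?_ ?_
        all_goals simp only [Finset.mem_Icc]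
        all_goals intro a ha
        · omega
        · omega
        · exact Nat.sub_sub_self (by omega)
        · exact Nat.sub_sub_self (by omega)
        · trivial
      rw [hbij]
      have hr : Finset.Icc 1 (i - 1) = (Finset.range i).erase 0 := by
        ext j
        simp only [Finset.mem_Icc, Finset.mem_erase, Finset.mem_range]
        omega
      rw [hr, Finset.sum_subset (Finset.erase_subset _ _), Finset.sum_range_id]
      intro x hx hx2
      simp only [Finset.mem_erase, Finset.mem_range] at *
      omega
    have h3 : ∏ j ∈ Finset.Icc 1 (i - 1), ((Q ^ j - 1) / (Q ^ (i - j) - 1)) = 1 := by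
      rw [Finset.prod_div_distrib]
      have hbij : ∏ j ∈ Finset.Icc 1 (i - 1), (Q ^ (i - j) - 1)
          = ∏ j ∈ Finset.Icc 1 (i - 1), (Q ^ j - 1) := by
        refine Finset.prod_nbij' (fun j => i - j) (fun j => i - j) ?_ ?_ ?_ ?_ ?_
        all_goals simp only [Finset.mem_Icc]
        all_goals intro a ha
        · omega
        · omega
        · exact Nat.sub_sub_self (by omega)
        · exact Nat.sub_sub_self (by omega)
        · trivial
      rw [hbij]
      refine div_self (Finset.prod_ne_zero_iff.mpr ?_)
      intro j hj
      simp only [Finset.mem_Icc] at hj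
      exact ne_of_gt (hpow1 j hj.1)
    rw [h2, h3, mul_one]
  rw [hright, hleft]
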